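/- Let S be a uniformly random string in {A,C,G,T}^n conditioned on having no two consecutive equal characters (first character uniform, each subsequent character uniform on the three characters different from its predecessor), and let R = (ACGT)*. Then cost_R(S) is distributed as X_1 + X_2 + ... + X_n where the X_i are independent, X_1 is uniform on {1,2,3,4}, and X_i is uniform on {1,2,3} for i ≥ 2; in particular E[cost_R(S)] = 2n + 1/2. -/

import Mathlib

open Finset
open scoped Classical

noncomputable def refCost (R : ℕ → Fin 4) (S : List (Fin 4)) : ℕ :=
  sInf {m | S.Sublist ((List.range m).map R)}

def refACGT : ℕ → Fin 4 := fun i => ⟨i % 4, by omega⟩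

def myGap (p : ℕ) (w : Fin 4) : ℕ := ((w : ℕ) + 4 - p % 4) % 4

def myF : ℕ → List (Fin 4) → ℕ
  | p, [] => p
  | p, w :: t => myF (p + myGap p w + 1) t

lemma le_myF (t : List (Fin 4)) : ∀ p, p ≤ myF p t := by
  induction t with
  | nil => intro p; simp [myF]
  | cons w t ih => intro p; exact le_trans (by omega) (ih (p + myGap p w + 1))

lemma sublist_iff_myF (k : ℕ) : ∀ (p : ℕ) (S : List (Fin 4)),
    S.Sublist ((List.range' p k).map refACGT) ↔ myF p S ≤ p + k := by
  induction k with
  | zero =>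
    intro p S
    simp only [List.range', List.map_nil, List.sublist_nil, Nat.add_zero]
    constructor
    · rintro rfl; simp [myF]
    · intro h
      cases S with
      | nil => rfl
      | cons w t =>
        exfalso
        have := le_myF t (p + myGap p w + 1)
        simp only [myF] at h
        omega
  | succ k ih =>
    intro p S
    rw [List.range'_succ, List.map_cons]
    cases S with
    | nil => simp [myF]
    | cons w t =>
      by_cases hw : (w : ℕ) = p % 4
      · have hR : refACGT p = w := by
          simp [refACGT]; exact Fin.ext (by simp [hw])
        rw [hR, List.cons_sublist_cons]
        have hgap : myGap p w = 0 := by simp [myGap, hw]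
        simp only [myF, hgap, Nat.add_zero]
        rw [ih (p + 1) t]
        constructor <;> intro h <;> omega
      · have hR : refACGT p ≠ w := by
          simp only [refACGT, ne_eq]
          intro h; apply hw; rw [← h]
        have hiff : (w :: t).Sublist (refACGT p :: (List.range' (p+1) k).map refACGT)
            ↔ (w :: t).Sublist ((List.range' (p+1) k).map refACGT) := by
          constructor
          · intro h
            cases h with
            | cons _ h => exact h
            | cons_cons => exact absurd rfl hR
          · exact fun h => h.cons _
        rw [hiff, ih (p + 1) (w :: t)]
        have hw4 : (w : ℕ) < 4 := w.isLt
        have : p + myGap p w = p + 1 + myGap (p + 1) w := by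
          simp only [myGap]; omega
        simp only [myF, this]
        omega

lemma refCost_eq_myF (S : List (Fin 4)) : refCost refACGT S = myF 0 S := by
  have hset : {m | S.Sublist ((List.range m).map refACGT)} = Set.Ici (myF 0 S) := by
    ext m
    rw [Set.mem_setOf_eq, List.range_eq_range', Set.mem_Ici, sublist_iff_myF m 0 S]
    omega
  rw [refCost, hset, csInf_Ici]

def myG (w x : Fin 4) : ℕ := (((x : ℕ) + 7 - (w : ℕ)) % 4) + 1

def myListSum : Fin 4 → List (Fin 4) → ℕ
  | _, [] => 0
  | w, x :: t => myG w x + myListSum x t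

lemma myF_eq (t : List (Fin 4)) : ∀ (m : ℕ) (w : Fin 4), (w : ℕ) = m % 4 →
    myF (m + 1) t = m + 1 + myListSum w t := by
  induction t with
  | nil => intro m w h; simp [myF, myListSum]
  | cons x t ih =>
    intro m w h
    have hw4 : (w : ℕ) < 4 := w.isLt
    have hx4 : (x : ℕ) < 4 := x.isLt
    have hgap : myGap (m + 1) x + 1 = myG w x := by
      simp only [myGap, myG]; omega
    have hpos : m + 1 + myGap (m + 1) x + 1 = (m + myG w x) + 1 := by omega
    have hmod : (x : ℕ) = (m + myG w x) % 4 := by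
      simp only [myG]; omega
    simp only [myF, hpos, ih (m + myG w x) x hmod, myListSum]
    omega

lemma myF_zero (v : Fin 4) (t : List (Fin 4)) :
    myF 0 (v :: t) = (v : ℕ) + 1 + myListSum v t := by
  have hv : (v : ℕ) < 4 := v.isLt
  have h1 : (0 : ℕ) + myGap 0 v + 1 = (v : ℕ) + 1 := by
    simp only [myGap]; omega
  have h2 : (v : ℕ) = (v : ℕ) % 4 := by omega
  simp only [myF, h1, myF_eq t (v : ℕ) v h2]

lemma myListSum_ofFn : ∀ (k : ℕ) (S : Fin (k + 1) → Fin 4),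
    myListSum (S 0) (List.ofFn fun i : Fin k => S i.succ)
      = ∑ i : Fin k, myG (S i.castSucc) (S i.succ) := by
  intro k
  induction k with
  | zero => intro S; simp [myListSum]
  | succ k ih =>
    intro S
    rw [List.ofFn_succ]
    simp only [myListSum]
    have := ih (fun i : Fin (k + 1) => S i.succ)
    rw [this, Fin.sum_univ_succ]
    simp [Fin.succ_castSucc, -Fin.castSucc_succ]

lemma chain'_ofFn_iff (k : ℕ) (S : Fin (k + 1) → Fin 4) :
    List.Chain' (· ≠ ·) (List.ofFn S) ↔ ∀ i : Fin k, S i.castSucc ≠ S i.succ := by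
  unfold List.Chain'
  rw [List.isChain_iff_getElem]
  constructor
  · intro h i
    have h2 := h i.val (by simp)
    simp only [List.getElem_ofFn] at h2
    convert h2 using 2 <;> apply Fin.ext <;> simp
  · intro h i hi
    simp only [List.length_ofFn] at hi
    have h2 := h ⟨i, by omega⟩
    simp only [List.getElem_ofFn]
    convert h2 using 2 <;> apply Fin.ext <;> simp

def dOf {k : ℕ} (S : Fin (k + 1) → Fin 4) : Fin k → Fin 3 :=
  fun i => ⟨(myG (S i.castSucc) (S i.succ) - 1) % 3, Nat.mod_lt _ (by norm_num)⟩

def cums {k : ℕ} (p : Fin 4 × (Fin k → Fin 3)) : ℕ → ℕ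
  | 0 => 0
  | j + 1 => cums p j + (if h : j < k then (p.2 ⟨j, h⟩ : ℕ) else 0) + 1

def psi {k : ℕ} (p : Fin 4 × (Fin k → Fin 3)) : Fin (k + 1) → Fin 4 :=
  fun j => ⟨((p.1 : ℕ) + cums p (j : ℕ)) % 4, Nat.mod_lt _ (by norm_num)⟩

lemma psi_chain {k : ℕ} (p : Fin 4 × (Fin k → Fin 3)) (i : Fin k) :
    psi p i.castSucc ≠ psi p i.succ := by
  intro hEq
  have hv := congrArg Fin.val hEq
  simp only [psi, Fin.coe_castSucc, Fin.val_succ] at hv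
  rw [show ((i : ℕ) + 1) = (i : ℕ) + 1 from rfl, cums, dif_pos i.isLt] at hv
  have hd : (p.2 ⟨(i : ℕ), i.isLt⟩ : ℕ) < 3 := (p.2 _).isLt
  omega

lemma psi_zero {k : ℕ} (p : Fin 4 × (Fin k → Fin 3)) : psi p 0 = p.1 := by
  apply Fin.ext
  have : ((0 : Fin (k + 1)) : ℕ) = 0 := rfl
  simp only [psi, this, cums]
  have := (p.1).isLt
  omega

lemma dOf_psi {k : ℕ} (p : Fin 4 × (Fin k → Fin 3)) : dOf (psi p) = p.2 := by
  funext i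
  apply Fin.ext
  simp only [dOf, myG, psi, Fin.coe_castSucc, Fin.val_succ]
  rw [show ((i : ℕ) + 1) = (i : ℕ) + 1 from rfl, cums, dif_pos i.isLt]
  have hd : (p.2 ⟨(i : ℕ), i.isLt⟩ : ℕ) < 3 := (p.2 _).isLt
  have hv : ((p.1 : ℕ)) < 4 := (p.1).isLt
  have : (⟨(i : ℕ), i.isLt⟩ : Fin k) = i := Fin.eta i i.isLt
  rw [this] at hd ⊢
  omega

lemma myG_bounds {w x : Fin 4} (h : w ≠ x) : 1 ≤ myG w x ∧ myG w x ≤ 3 := by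
  have hv : (w : ℕ) ≠ (x : ℕ) := fun hh => h (Fin.ext hh)
  have := w.isLt; have := x.isLt
  simp only [myG]; omega

lemma dOf_add_one {k : ℕ} (S : Fin (k + 1) → Fin 4)
    (hc : ∀ i : Fin k, S i.castSucc ≠ S i.succ) (i : Fin k) :
    (dOf S i : ℕ) + 1 = myG (S i.castSucc) (S i.succ) := by
  obtain ⟨h1, h3⟩ := myG_bounds (hc i)
  simp only [dOf]
  omega

lemma psi_dOf {k : ℕ} (S : Fin (k + 1) → Fin 4)
    (hc : ∀ i : Fin k, S i.castSucc ≠ S i.succ) : psi (S 0, dOf S) = S := by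
  have key : ∀ (j : ℕ) (h : j < k + 1),
      ((S 0 : ℕ) + cums (S 0, dOf S) j) % 4 = (S ⟨j, h⟩ : ℕ) := by
    intro j
    induction j with
    | zero =>
      intro h
      have h0 : (S ⟨0, h⟩ : ℕ) = (S 0 : ℕ) := rfl
      have := (S 0).isLt
      simp only [cums, Nat.add_zero, h0]
      omega
    | succ j ih =>
      intro h
      have hjk : j < k := by omega
      have ihj := ih (Nat.lt_of_succ_lt h)
      rw [cums, dif_pos hjk]
      have hterm := dOf_add_one S hc ⟨j, hjk⟩
      rw [show (⟨j, hjk⟩ : Fin k).castSucc = (⟨j, Nat.lt_of_succ_lt h⟩ : Fin (k + 1)) from rfl,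
        show (⟨j, hjk⟩ : Fin k).succ = (⟨j + 1, h⟩ : Fin (k + 1)) from rfl] at hterm
      have hp2 : ((S 0, dOf S).2 ⟨j, hjk⟩ : ℕ) = ((dOf S ⟨j, hjk⟩ : ℕ)) := rfl
      rw [hp2]
      have hw4 : (S ⟨j, Nat.lt_of_succ_lt h⟩ : ℕ) < 4 := (S _).isLt
      have hx4 : (S ⟨j + 1, h⟩ : ℕ) < 4 := (S _).isLt
      simp only [myG] at hterm
      omega
  funext j
  apply Fin.ext
  have hkey := key (j : ℕ) j.isLt
  simp only [psi]
  rw [hkey]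

lemma cost_eq {k : ℕ} (S : Fin (k + 1) → Fin 4)
    (hc : ∀ i : Fin k, S i.castSucc ≠ S i.succ) :
    refCost refACGT (List.ofFn S)
      = ((S 0 : ℕ) + 1) + ∑ i : Fin k, ((dOf S i : ℕ) + 1) := by
  rw [refCost_eq_myF, List.ofFn_succ, myF_zero, myListSum_ofFn]
  congr 1
  exact Finset.sum_congr rfl fun i _ => (dOf_add_one S hc i).symm

def revE (k : ℕ) : (Fin k → Fin 3) ≃ (Fin k → Fin 3) :=
  Equiv.piCongrRight fun _ => (Fin.revPerm : Equiv.Perm (Fin 3))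

lemma sum_revPair (k : ℕ) :
    (∑ d : Fin k → Fin 3, ∑ i, ((d i : ℕ) + 1)) * 2 = 3 ^ k * (4 * k) := by
  classical
  have h1 : (∑ d : Fin k → Fin 3, ∑ i, ((d i : ℕ) + 1))
      = ∑ d : Fin k → Fin 3, ∑ i, (((revE k d) i : ℕ) + 1) :=
    (Equiv.sum_comp (revE k) (fun d => ∑ i, ((d i : ℕ) + 1))).symm
  have h2 : ∀ d : Fin k → Fin 3,
      (∑ i, ((d i : ℕ) + 1)) + (∑ i, (((revE k d) i : ℕ) + 1)) = 4 * k := by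
    intro d
    clear h1
    rw [← Finset.sum_add_distrib]
    have : ∀ i : Fin k, ((d i : ℕ) + 1) + (((revE k d) i : ℕ) + 1) = 4 := by
      intro i
      have he : (revE k d) i = (d i).rev := rfl
      rw [he, Fin.val_rev]
      have := (d i).isLt
      omega
    rw [Finset.sum_congr rfl fun i _ => this i]
    simp [Finset.card_univ, mul_comm]
  calc (∑ d : Fin k → Fin 3, ∑ i, ((d i : ℕ) + 1)) * 2
      = (∑ d : Fin k → Fin 3, ∑ i, ((d i : ℕ) + 1))
        + (∑ d : Fin k → Fin 3, ∑ i, (((revE k d) i : ℕ) + 1)) := by rw [← h1]; ring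
    _ = ∑ d : Fin k → Fin 3, ((∑ i, ((d i : ℕ) + 1)) + (∑ i, (((revE k d) i : ℕ) + 1))) := by
        rw [Finset.sum_add_distrib]
    _ = ∑ _d : Fin k → Fin 3, 4 * k := Finset.sum_congr rfl fun d _ => h2 d
    _ = 3 ^ k * (4 * k) := by
        simp [Finset.card_univ]

lemma pair_total (k : ℕ) :
    2 * (∑ p : Fin 4 × (Fin k → Fin 3), (((p.1 : ℕ) + 1) + ∑ i, ((p.2 i : ℕ) + 1)))
      = (4 * (k + 1) + 1) * (4 * 3 ^ k) := by
  rw [Fintype.sum_prod_type]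
  have hcard : Fintype.card (Fin k → Fin 3) = 3 ^ k := by simp
  have hv : ∀ v : Fin 4, (∑ d : Fin k → Fin 3, (((v : ℕ) + 1) + ∑ i, ((d i : ℕ) + 1)))
      = 3 ^ k * ((v : ℕ) + 1) + (∑ d : Fin k → Fin 3, ∑ i, ((d i : ℕ) + 1)) := by
    intro v
    rw [Finset.sum_add_distrib]
    congr 1
    simp [Finset.card_univ, mul_comm]
  rw [Finset.sum_congr rfl fun v _ => hv v, Finset.sum_add_distrib]
  have h10 : (∑ v : Fin 4, (3 ^ k * ((v : ℕ) + 1))) = 3 ^ k * 10 := by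
    rw [← Finset.mul_sum]
    norm_num [Fin.sum_univ_four]
  rw [h10]
  simp only [Finset.sum_const, Finset.card_univ, Fintype.card_fin, smul_eq_mul]
  have := sum_revPair k
  set A := ∑ d : Fin k → Fin 3, ∑ i, ((d i : ℕ) + 1)
  ring_nf
  ring_nf at this
  nlinarith [this]

/-- For S uniformly random among strands of length n without homopolymers, the
cost with reference (ACGT)* is distributed as X₁ + ⋯ + Xₙ with X₁ uniform on
{1,2,3,4} and Xᵢ uniform on {1,2,3} for i ≥ 2 (stated as equality of counts),
and its expectation is 2n + 1/2 (stated as 2 · Σ cost = (4n+1) · 4 · 3^(n-1)). -/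
theorem stmt4 (n : ℕ) (hn : 1 ≤ n) :
    (∀ m : ℕ,
      (Finset.univ.filter (fun S : Fin n → Fin 4 =>
        List.Chain' (· ≠ ·) (List.ofFn S) ∧ refCost refACGT (List.ofFn S) = m)).card
      = (Finset.univ.filter (fun p : Fin 4 × (Fin (n - 1) → Fin 3) =>
          ((p.1 : ℕ) + 1) + ∑ i, ((p.2 i : ℕ) + 1) = m)).card) ∧
    2 * (∑ S ∈ Finset.univ.filter
          (fun S : Fin n → Fin 4 => List.Chain' (· ≠ ·) (List.ofFn S)),
        refCost refACGT (List.ofFn S)) = (4 * n + 1) * (4 * 3 ^ (n - 1)) := by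
  obtain ⟨k, rfl⟩ : ∃ k, n = k + 1 := ⟨n - 1, by omega⟩
  simp only [Nat.add_sub_cancel]
  constructor
  · intro m
    refine Finset.card_bij' (fun S _ => (S 0, dOf S)) (fun p _ => psi p) ?_ ?_ ?_ ?_
    · intro S hS
      simp only [Finset.mem_filter, Finset.mem_univ, true_and] at hS ⊢
      obtain ⟨hchain, hcost⟩ := hS
      rw [← hcost, cost_eq S ((chain'_ofFn_iff k S).mp hchain)]
      rfl
    · intro p hp
      simp only [Finset.mem_filter, Finset.mem_univ, true_and] at hp ⊢
      refine ⟨(chain'_ofFn_iff k (psi p)).mpr (psi_chain p), ?_⟩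
      rw [cost_eq (psi p) (psi_chain p), psi_zero, dOf_psi]
      exact hp
    · intro S hS
      simp only [Finset.mem_filter, Finset.mem_univ, true_and] at hS
      exact psi_dOf S ((chain'_ofFn_iff k S).mp hS.1)
    · intro p hp
      exact Prod.ext (psi_zero p) (dOf_psi p)
  · have hsum : (∑ S ∈ Finset.univ.filter
          (fun S : Fin (k + 1) → Fin 4 => List.Chain' (· ≠ ·) (List.ofFn S)),
        refCost refACGT (List.ofFn S))
        = ∑ p : Fin 4 × (Fin k → Fin 3), (((p.1 : ℕ) + 1) + ∑ i, ((p.2 i : ℕ) + 1)) := by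
      refine Finset.sum_bij' (fun S _ => (S 0, dOf S)) (fun p _ => psi p) ?_ ?_ ?_ ?_ ?_
      · intro S hS; exact Finset.mem_univ _
      · intro p hp
        simp only [Finset.mem_filter, Finset.mem_univ, true_and]
        exact (chain'_ofFn_iff k (psi p)).mpr (psi_chain p)
      · intro S hS
        simp only [Finset.mem_filter, Finset.mem_univ, true_and] at hS
        exact psi_dOf S ((chain'_ofFn_iff k S).mp hS)
      · intro p hp; exact Prod.ext (psi_zero p) (dOf_psi p)
      · intro S hS
        simp only [Finset.mem_filter, Finset.mem_univ, true_and] at hS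
        exact cost_eq S ((chain'_ofFn_iff k S).mp hS)
    rw [hsum]
    exact pair_total k
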